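/- Under the hypotheses of the previous setting (ψ unital potential, μ invariant for the dual of L_ψ), for all f, g ∈ C(X) and all n ≥ 1: ∫ L_ψⁿ(f)(σⁿ(x)) g(x) dμ(x) = ∫ f(x) L_ψⁿ(g)(σⁿ(x)) dμ(x). Equivalently, the operator E_n := πⁿ ∘ L_ψⁿ is self-adjoint with respect to the bilinear pairing (f,g) ↦ ∫ f g dμ. -/
import Mathlib


open MeasureTheory

/-- The transfer operator with potential `ψ`. -/
noncomputable def Lpsi {X : Type*} (σ : X → X) (ψ : X → ℝ) (f : X → ℂ) : X → ℂ :=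
  fun x => ∑' y : (σ ⁻¹' {x} : Set X), (ψ (y : X) : ℂ) * f (y : X)

/-- Fibers of a local homeomorphism on a compact Hausdorff space are finite. -/
lemma fiber_finite_aux {X : Type*} [TopologicalSpace X] [CompactSpace X] [T2Space X] {σ : X → X}
    (hloc : IsLocalHomeomorph σ) (x : X) : (σ ⁻¹' {x}).Finite := by
  have hcl : IsClosed (σ ⁻¹' {x}) := (isClosed_singleton).preimage hloc.continuous
  have hcpt : IsCompact (σ ⁻¹' {x}) := hcl.isCompact
  have hcov : ∀ y ∈ σ ⁻¹' {x}, ∃ U : Set X, IsOpen U ∧ y ∈ U ∧ Set.InjOn σ U := by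
    intro y _
    obtain ⟨e, hy, he⟩ := hloc y
    exact ⟨e.source, e.open_source, hy, by rw [he]; exact e.injOn⟩
  choose! U hUo hyU hinj using hcov
  obtain ⟨t, hts, htfin, hcover⟩ := hcpt.elim_finite_subcover_image
    (fun y hy => hUo y hy) (fun y hy => Set.mem_biUnion hy (hyU y hy))
  refine htfin.subset fun z hz => ?_
  obtain ⟨y, hyt, hzU⟩ := Set.mem_iUnion₂.mp (hcover hz)
  have : z = y := hinj y (hts hyt) hzU (hyU y (hts hyt)) (by
    simp only [Set.mem_preimage, Set.mem_singleton_iff] at hz ⊢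
    rw [hz, (hts hyt)])
  rwa [this]

/-- The transfer operator preserves continuity. -/
lemma lpsi_continuous_aux {X : Type*} [TopologicalSpace X] [CompactSpace X] [T2Space X]
    {σ : X → X} (hloc : IsLocalHomeomorph σ) {ψ : X → ℝ} (hψc : Continuous ψ)
    {f : X → ℂ} (hf : Continuous f) : Continuous (Lpsi σ ψ f) := by
  rw [continuous_iff_continuousAt]
  intro x
  have hfin := fiber_finite_aux hloc x
  obtain ⟨V, hV, hVdisj⟩ := hfin.t2_separation
  choose e he hσe using hloc
  set F := hfin.toFinset with hFdef
  have hFmem : ∀ y, y ∈ F ↔ σ y = x := by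
    intro y; simp [hFdef, Set.Finite.mem_toFinset]
  set U : X → Set X := fun y => (e y).source ∩ V y with hUdef
  have hUo : ∀ y, IsOpen (U y) := fun y => (e y).open_source.inter (hV y).2
  have hyU : ∀ y, y ∈ U y := fun y => ⟨he y, (hV y).1⟩
  set K : Set X := (⋃ y ∈ F, U y)ᶜ with hKdef
  have hKcl : IsClosed K := (isOpen_biUnion (fun y _ => hUo y)).isClosed_compl
  have hσc : Continuous σ := IsLocalHomeomorph.continuous (fun y => ⟨e y, he y, hσe y⟩)
  have hKimcl : IsClosed (σ '' K) := (hKcl.isCompact.image hσc).isClosed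
  set W : Set X := (⋂ y ∈ F, σ '' U y) \ σ '' K with hWdef
  have hσopen : IsOpenMap σ := IsLocalHomeomorph.isOpenMap (fun y => ⟨e y, he y, hσe y⟩)
  have hWopen : IsOpen W := ((isOpen_biInter_finset (fun y _ => hσopen _ (hUo y)))).sdiff hKimcl
  have hxW : x ∈ W := by
    constructor
    · refine Set.mem_iInter₂.mpr fun y hy => ⟨y, hyU y, (hFmem y).mp hy⟩
    · rintro ⟨z, hzK, hzx⟩
      exact hzK (Set.mem_biUnion ((hFmem z).mpr hzx) (hyU z))
  have hsymm : ∀ y, ∀ z ∈ U y, (e y).symm (σ z) = z := by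
    intro y z hz
    have hz' : z ∈ (e y).source := hz.1
    rw [hσe y]; exact (e y).left_inv hz'
  have key1 : ∀ x' ∈ W, ∀ y ∈ F, (e y).symm x' ∈ U y ∧ σ ((e y).symm x') = x' := by
    intro x' hx' y hy
    obtain ⟨z, hzU, hz⟩ := Set.mem_iInter₂.mp hx'.1 y hy
    have := hsymm y z hzU
    rw [← hz, this]
    exact ⟨hzU, rfl⟩
  have key2 : ∀ x' ∈ W, ∀ z, σ z = x' → ∃ y ∈ F, z = (e y).symm x' := by
    intro x' hx' z hz
    by_cases hzK : z ∈ K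
    · exact absurd ⟨z, hzK, hz⟩ hx'.2
    · obtain ⟨y, hy, hzU⟩ := Set.mem_iUnion₂.mp (not_not.mp hzK)
      exact ⟨y, hy, by rw [← hz, hsymm y z hzU]⟩
  have hWsubT : ∀ y ∈ F, W ⊆ (e y).target := by
    intro y hy x' hx'
    obtain ⟨z, hzU, hz⟩ := Set.mem_iInter₂.mp hx'.1 y hy
    rw [← hz, hσe y]
    exact (e y).map_source hzU.1
  have hformula : ∀ x' ∈ W, Lpsi σ ψ f x'
      = ∑ y ∈ F, (ψ ((e y).symm x') : ℂ) * f ((e y).symm x') := by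
    intro x' hx'
    have hfin' := fiber_finite_aux (fun y => ⟨e y, he y, hσe y⟩ : IsLocalHomeomorph σ) x'
    haveI := hfin'.fintype
    rw [Lpsi, tsum_fintype]
    symm
    refine Finset.sum_bij (fun y hy => (⟨(e y).symm x',
        by simp [Set.mem_preimage, (key1 x' hx' y hy).2]⟩ : (σ ⁻¹' {x'} : Set X)))
      (fun y hy => Finset.mem_univ _) ?_ ?_ ?_
    · intro a₁ ha₁ a₂ ha₂ hEq
      by_contra hne
      have h1 : (e a₁).symm x' ∈ V a₁ := (key1 x' hx' a₁ ha₁).1.2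
      have h2 : (e a₂).symm x' ∈ V a₂ := (key1 x' hx' a₂ ha₂).1.2
      have heq2 : (e a₁).symm x' = (e a₂).symm x' := congrArg Subtype.val hEq
      have hd := hVdisj (hfin.mem_toFinset.mp ha₁) (hfin.mem_toFinset.mp ha₂) hne
      exact (Set.disjoint_left.mp hd h1) (heq2 ▸ h2)
    · intro b _
      obtain ⟨y, hy, hby⟩ := key2 x' hx' (b : X) b.2
      exact ⟨y, hy, Subtype.ext hby.symm⟩
    · intro y hy; rfl
  have hGc : ContinuousOn (fun x' => ∑ y ∈ F, (ψ ((e y).symm x') : ℂ) * f ((e y).symm x')) W := by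
    refine continuousOn_finset_sum F fun y hy => ?_
    have hsc : ContinuousOn (fun x' => (e y).symm x') W :=
      (e y).continuousOn_symm.mono (hWsubT y hy)
    exact ((Complex.continuous_ofReal.comp hψc).comp_continuousOn hsc).mul
      (hf.comp_continuousOn hsc)
  refine ContinuousAt.congr (hGc.continuousAt (hWopen.mem_nhds hxW)) ?_
  exact Filter.eventuallyEq_of_mem (hWopen.mem_nhds hxW) fun x' hx' => (hformula x' hx').symm

lemma lpsi_iterate_continuous_aux {X : Type*} [TopologicalSpace X] [CompactSpace X] [T2Space X]
    {σ : X → X} (hloc : IsLocalHomeomorph σ) {ψ : X → ℝ} (hψc : Continuous ψ)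
    {f : X → ℂ} (hf : Continuous f) (n : ℕ) : Continuous ((Lpsi σ ψ)^[n] f) := by
  induction n with
  | zero => exact hf
  | succ n ih => rw [Function.iterate_succ_apply']; exact lpsi_continuous_aux hloc hψc ih

lemma lpsi_pullback_mul_aux {X : Type*} (σ : X → X) (ψ : X → ℝ) (F G : X → ℂ) :
    Lpsi σ ψ (fun z => F (σ z) * G z) = fun x => F x * Lpsi σ ψ G x := by
  funext x
  rw [Lpsi, Lpsi]
  rw [← tsum_mul_left]
  refine tsum_congr fun y => ?_
  have hy : σ (y : X) = x := y.2
  rw [hy]; ring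

lemma lpsi_iterate_pullback_aux {X : Type*} (σ : X → X) (ψ : X → ℝ) (F : X → ℂ) (n : ℕ) :
    ∀ G : X → ℂ, (Lpsi σ ψ)^[n] (fun z => F (σ^[n] z) * G z)
      = fun x => F x * (Lpsi σ ψ)^[n] G x := by
  induction n with
  | zero => intro G; simp
  | succ n ih =>
    intro G
    rw [Function.iterate_succ_apply]
    have h1 : (fun z => F (σ^[n+1] z) * G z) = (fun z => (F ∘ σ^[n]) (σ z) * G z) := by
      funext z; simp [Function.iterate_succ_apply, Function.comp]
    rw [h1, lpsi_pullback_mul_aux σ ψ (F ∘ σ^[n]) G]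
    have := ih (Lpsi σ ψ G)
    simp only [Function.comp] at this ⊢
    rw [this, Function.iterate_succ_apply]

lemma integral_lpsi_iterate_aux {X : Type*} [TopologicalSpace X] [CompactSpace X] [T2Space X]
    [MeasurableSpace X] [BorelSpace X] {σ : X → X} (hloc : IsLocalHomeomorph σ)
    {ψ : X → ℝ} (hψc : Continuous ψ) (μ : Measure X) [IsProbabilityMeasure μ]
    (hinv : ∀ f : X → ℂ, Continuous f → ∫ x, Lpsi σ ψ f x ∂μ = ∫ x, f x ∂μ) (n : ℕ) :
    ∀ h : X → ℂ, Continuous h → ∫ x, (Lpsi σ ψ)^[n] h x ∂μ = ∫ x, h x ∂μ := by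
  induction n with
  | zero => intro h _; simp
  | succ n ih =>
    intro h hc
    rw [Function.iterate_succ_apply]
    rw [ih (Lpsi σ ψ h) (lpsi_continuous_aux hloc hψc hc)]
    exact hinv h hc

/-- If `ψ` is a unital potential and `μ` is invariant for the dual of `L_ψ`, then
`∫ L_ψⁿ(f)(σⁿ x) g(x) dμ = ∫ f(x) L_ψⁿ(g)(σⁿ x) dμ`, i.e. the conditional expectation
`E_n = πⁿ ∘ L_ψⁿ` is self-adjoint for the pairing `(f,g) ↦ ∫ f g dμ`. -/
theorem integral_selfadjoint_expectation {X : Type*} [TopologicalSpace X] [CompactSpace X]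
    [T2Space X] [MeasurableSpace X] [BorelSpace X]
    (σ : X → X) (hloc : IsLocalHomeomorph σ) (hsurj : Function.Surjective σ)
    (ψ : X → ℝ) (hψc : Continuous ψ) (hψ0 : ∀ x, 0 ≤ ψ x)
    (hunital : ∀ x : X, ∑' y : (σ ⁻¹' {x} : Set X), ψ (y : X) = 1)
    (μ : Measure X) [IsProbabilityMeasure μ]
    (hinv : ∀ f : X → ℂ, Continuous f → ∫ x, Lpsi σ ψ f x ∂μ = ∫ x, f x ∂μ)
    (f g : X → ℂ) (hf : Continuous f) (hg : Continuous g) (n : ℕ) (hn : 1 ≤ n) :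
    ∫ x, (Lpsi σ ψ)^[n] f (σ^[n] x) * g x ∂μ
      = ∫ x, f x * (Lpsi σ ψ)^[n] g (σ^[n] x) ∂μ := by
  have hσc : Continuous σ := hloc.continuous
  have hσnc : Continuous (σ^[n]) := hσc.iterate n
  have hΦ : Continuous ((Lpsi σ ψ)^[n] f) := lpsi_iterate_continuous_aux hloc hψc hf n
  have hΨ : Continuous ((Lpsi σ ψ)^[n] g) := lpsi_iterate_continuous_aux hloc hψc hg n
  have h1 : Continuous (fun x => (Lpsi σ ψ)^[n] f (σ^[n] x) * g x) :=
    (hΦ.comp hσnc).mul hg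
  have h2 : Continuous (fun x => (Lpsi σ ψ)^[n] g (σ^[n] x) * f x) :=
    (hΨ.comp hσnc).mul hf
  have e1 : ∫ x, (Lpsi σ ψ)^[n] f (σ^[n] x) * g x ∂μ
      = ∫ x, (Lpsi σ ψ)^[n] f x * (Lpsi σ ψ)^[n] g x ∂μ := by
    rw [← integral_lpsi_iterate_aux hloc hψc μ hinv n _ h1]
    rw [lpsi_iterate_pullback_aux σ ψ ((Lpsi σ ψ)^[n] f) n g]
  have e2 : ∫ x, f x * (Lpsi σ ψ)^[n] g (σ^[n] x) ∂μ
      = ∫ x, (Lpsi σ ψ)^[n] g x * (Lpsi σ ψ)^[n] f x ∂μ := by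
    have : (fun x => f x * (Lpsi σ ψ)^[n] g (σ^[n] x))
        = (fun x => (Lpsi σ ψ)^[n] g (σ^[n] x) * f x) := by
      funext x; ring
    rw [this, ← integral_lpsi_iterate_aux hloc hψc μ hinv n _ h2]
    rw [lpsi_iterate_pullback_aux σ ψ ((Lpsi σ ψ)^[n] g) n f]
  rw [e1, e2]
  congr 1
  funext x
  ring
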